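/- Let π ∈ S_n be a permutation moving exactly k points (i.e., with n − k fixed points). Then the centralizer of π in S_n has order at most (n − k)! · k^{k/2} when k ≤ n/2, and consequently |C(π)| ≥ n!/((n−k)!·k^{k/2}) ≥ (n/2)^{k/2}. -/

import Mathlib

open MulAction

/-- The centralizer of `π` injects into (perms of the fixed points) × (cycle → support). -/
theorem centralizer_card_le_aux {n : ℕ} (π : Equiv.Perm (Fin n)) :
    Nat.card (Subgroup.centralizer {π} : Subgroup (Equiv.Perm (Fin n))) ≤
      Nat.factorial (n - π.support.card) *
        π.support.card ^ π.cycleFactorsFinset.card := by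
  classical
  set S := π.support with hS
  -- choose a point in each cycle
  have hce : ∀ C : π.cycleFactorsFinset, ∃ x, x ∈ (C : Equiv.Perm (Fin n)).support := by
    intro C
    have h2 := (Equiv.Perm.mem_cycleFactorsFinset_iff.mp C.2).1.two_le_card_support
    exact Finset.card_pos.mp (by omega)
  choose a ha using hce
  -- commuting elements preserve the support
  have hmem : ∀ σ : Subgroup.centralizer ({π} : Set (Equiv.Perm (Fin n))), ∀ x : Fin n,
      (σ : Equiv.Perm (Fin n)) x ∈ S ↔ x ∈ S := by
    intro σ x
    have hcom : (σ : Equiv.Perm (Fin n)) * π = π * (σ : Equiv.Perm (Fin n)) :=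
      Subgroup.mem_centralizer_singleton_iff.mp σ.2
    have hx : (σ : Equiv.Perm (Fin n)) (π x) = π ((σ : Equiv.Perm (Fin n)) x) := by
      rw [← Equiv.Perm.mul_apply, ← Equiv.Perm.mul_apply, hcom]
    simp only [hS, Equiv.Perm.mem_support]
    rw [← hx]
    exact not_congr (Equiv.apply_eq_iff_eq _)
  have haS : ∀ C : π.cycleFactorsFinset, a C ∈ S :=
    fun C => Equiv.Perm.mem_cycleFactorsFinset_support_le C.2 (ha C)
  let Φ : Subgroup.centralizer ({π} : Set (Equiv.Perm (Fin n))) →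
      Equiv.Perm {x : Fin n // x ∉ S} × (π.cycleFactorsFinset → S) := fun σ =>
    ⟨(σ : Equiv.Perm (Fin n)).subtypePerm (fun x => not_congr (hmem σ x)),
     fun C => ⟨(σ : Equiv.Perm (Fin n)) (a C), (hmem σ (a C)).mpr (haS C)⟩⟩
  have hΦ : Function.Injective Φ := by
    intro σ τ h
    rw [Prod.ext_iff] at h
    obtain ⟨h1, h2⟩ := h
    refine Subtype.ext (Equiv.ext fun x => ?_)
    by_cases hx : x ∈ S
    · have hCmem : π.cycleOf x ∈ π.cycleFactorsFinset :=
        Equiv.Perm.cycleOf_mem_cycleFactorsFinset_iff.mpr hx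
      set C : π.cycleFactorsFinset := ⟨π.cycleOf x, hCmem⟩ with hC
      have haC := ha C
      rw [hC, Equiv.Perm.mem_support_cycleOf_iff] at haC
      obtain ⟨i, hi⟩ := haC.1
      have hx' : x = (π ^ (-i)) (a C) := by
        rw [← hi, ← Equiv.Perm.mul_apply, ← zpow_add, neg_add_cancel, zpow_zero,
          Equiv.Perm.one_apply]
      have key : ∀ ρ : Subgroup.centralizer ({π} : Set (Equiv.Perm (Fin n))),
          (ρ : Equiv.Perm (Fin n)) x = (π ^ (-i)) ((ρ : Equiv.Perm (Fin n)) (a C)) := by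
        intro ρ
        have hc0 : Commute (ρ : Equiv.Perm (Fin n)) π :=
          Subgroup.mem_centralizer_singleton_iff.mp ρ.2
        have hcom : Commute ((ρ : Equiv.Perm (Fin n))) (π ^ (-i)) := hc0.zpow_right (-i)
        rw [hx', ← Equiv.Perm.mul_apply, hcom, Equiv.Perm.mul_apply]
      have hστ : (σ : Equiv.Perm (Fin n)) (a C) = (τ : Equiv.Perm (Fin n)) (a C) :=
        congrArg Subtype.val (congrFun h2 C)
      rw [key σ, key τ, hστ]
    · have := congrArg (fun e => ((e ⟨x, hx⟩ : {x : Fin n // x ∉ S}) : Fin n)) h1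
      simpa [Φ, Equiv.Perm.subtypePerm_apply] using this
  have hle := Nat.card_le_card_of_injective Φ hΦ
  have ht : Nat.card (Equiv.Perm {x : Fin n // x ∉ S} × (π.cycleFactorsFinset → S)) =
      Nat.factorial (n - π.support.card) *
        π.support.card ^ π.cycleFactorsFinset.card := by
    rw [Nat.card_eq_fintype_card, Fintype.card_prod, Fintype.card_perm, Fintype.card_fun]
    congr 2
    · rw [Fintype.card_subtype_compl]
      simp only [Fintype.card_fin, Fintype.card_coe, hS]
    · simp only [Fintype.card_coe, hS]
    · simp only [Fintype.card_coe]
  rw [ht] at hle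
  simpa [hS] using hle

theorem two_mul_card_cycleFactors_le {n : ℕ} (π : Equiv.Perm (Fin n)) :
    2 * π.cycleFactorsFinset.card ≤ π.support.card := by
  have h1 : π.cycleType.sum = π.support.card := Equiv.Perm.sum_cycleType π
  have h2 : Multiset.card π.cycleType = π.cycleFactorsFinset.card := by
    rw [Equiv.Perm.cycleType_def, Multiset.card_map]; rfl
  have h3 := Multiset.card_nsmul_le_sum (s := π.cycleType) (a := 2)
    (fun x hx => Equiv.Perm.two_le_of_mem_cycleType hx)
  rw [smul_eq_mul] at h3
  omega

theorem conj_class_card_mul_centralizer_card {n : ℕ} (π : Equiv.Perm (Fin n)) :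
    Nat.card {x : Equiv.Perm (Fin n) | IsConj π x} *
      Nat.card (Subgroup.centralizer {π} : Subgroup (Equiv.Perm (Fin n))) =
      Nat.factorial n := by
  classical
  have hset : {x : Equiv.Perm (Fin n) | IsConj π x} =
      MulAction.orbit (ConjAct (Equiv.Perm (Fin n))) π := by
    ext x
    rw [Set.mem_setOf_eq, ConjAct.mem_orbit_conjAct, isConj_comm]
  have hstab : Nat.card (Subgroup.centralizer ({π} : Set (Equiv.Perm (Fin n)))) =
      Nat.card (MulAction.stabilizer (ConjAct (Equiv.Perm (Fin n))) π) := by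
    rw [Subgroup.centralizer_eq_comap_stabilizer]
    exact Nat.card_congr (Equiv.subtypeEquiv ConjAct.toConjAct.toEquiv (fun x => by
      simp [Subgroup.mem_comap]; exact Iff.rfl))
  letI : Fintype (MulAction.orbit (ConjAct (Equiv.Perm (Fin n))) π) := Fintype.ofFinite _
  rw [hset, hstab, Nat.card_eq_fintype_card, Nat.card_eq_fintype_card,
    MulAction.card_orbit_mul_card_stabilizer_eq_card_group]
  rw [show Fintype.card (ConjAct (Equiv.Perm (Fin n))) = Fintype.card (Equiv.Perm (Fin n))
      from Fintype.card_congr ConjAct.ofConjAct.toEquiv,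
    Fintype.card_perm, Fintype.card_fin]

/-- If `π ∈ S_n` moves exactly `k` points with `k ≤ n/2`, then the centralizer of `π` in
`S_n` has order at most `(n-k)! · k^{k/2}`, and consequently the conjugacy class satisfies
`|C(π)| ≥ n!/((n-k)!·k^{k/2}) ≥ (n/2)^{k/2}`. -/
theorem centralizer_bound_symmetric_group {n : ℕ} (π : Equiv.Perm (Fin n))
    (k : ℕ) (hk : k = π.support.card) (hk2 : 2 * k ≤ n) :
    (Nat.card (Subgroup.centralizer {π} : Subgroup (Equiv.Perm (Fin n))) : ℝ) ≤
      (Nat.factorial (n - k) : ℝ) * (k : ℝ) ^ ((k : ℝ) / 2) ∧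
    (Nat.factorial n : ℝ) / ((Nat.factorial (n - k) : ℝ) * (k : ℝ) ^ ((k : ℝ) / 2)) ≤
      (Nat.card {x : Equiv.Perm (Fin n) | IsConj π x} : ℝ) ∧
    ((n : ℝ) / 2) ^ ((k : ℝ) / 2) ≤
      (Nat.card {x : Equiv.Perm (Fin n) | IsConj π x} : ℝ) := by
  classical
  set c := π.cycleFactorsFinset.card with hc
  have h2c : 2 * c ≤ k := by rw [hk]; exact two_mul_card_cycleFactors_le π
  have hkn : k ≤ n := by omega
  -- the power comparison
  have hpow : ((k : ℝ) ^ c : ℝ) ≤ (k : ℝ) ^ ((k : ℝ) / 2) := by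
    rcases Nat.eq_zero_or_pos k with h0 | h1
    · have hc0 : c = 0 := by omega
      simp [h0, hc0]
    · rw [← Real.rpow_natCast (k : ℝ) c]
      refine Real.rpow_le_rpow_of_exponent_le (by exact_mod_cast h1) ?_
      have : (2 * c : ℝ) ≤ (k : ℝ) := by exact_mod_cast h2c
      linarith
  -- Part 1
  have part1 : (Nat.card (Subgroup.centralizer {π} : Subgroup (Equiv.Perm (Fin n))) : ℝ) ≤
      (Nat.factorial (n - k) : ℝ) * (k : ℝ) ^ ((k : ℝ) / 2) := by
    have h := centralizer_card_le_aux π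
    rw [← hk, ← hc] at h
    calc (Nat.card (Subgroup.centralizer {π} : Subgroup (Equiv.Perm (Fin n))) : ℝ)
        ≤ (Nat.factorial (n - k) : ℝ) * (k : ℝ) ^ c := by exact_mod_cast h
      _ ≤ (Nat.factorial (n - k) : ℝ) * (k : ℝ) ^ ((k : ℝ) / 2) :=
          mul_le_mul_of_nonneg_left hpow (by positivity)
  -- positivity facts
  have hrpos : (0 : ℝ) < (k : ℝ) ^ ((k : ℝ) / 2) := by
    rcases Nat.eq_zero_or_pos k with h0 | h1
    · simp [h0]
    · exact Real.rpow_pos_of_pos (by exact_mod_cast h1) _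
  have hDpos : (0 : ℝ) < (Nat.factorial (n - k) : ℝ) * (k : ℝ) ^ ((k : ℝ) / 2) :=
    mul_pos (by exact_mod_cast (n - k).factorial_pos) hrpos
  have hcentpos : 0 < Nat.card (Subgroup.centralizer {π} : Subgroup (Equiv.Perm (Fin n))) :=
    Nat.card_pos
  have heq := conj_class_card_mul_centralizer_card π
  have heqR : (Nat.card {x : Equiv.Perm (Fin n) | IsConj π x} : ℝ) *
      (Nat.card (Subgroup.centralizer {π} : Subgroup (Equiv.Perm (Fin n))) : ℝ) =
      (Nat.factorial n : ℝ) := by exact_mod_cast heq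
  -- Part 2
  have part2 : (Nat.factorial n : ℝ) /
      ((Nat.factorial (n - k) : ℝ) * (k : ℝ) ^ ((k : ℝ) / 2)) ≤
      (Nat.card {x : Equiv.Perm (Fin n) | IsConj π x} : ℝ) := by
    have hcR : (0 : ℝ) < (Nat.card (Subgroup.centralizer {π} :
        Subgroup (Equiv.Perm (Fin n))) : ℝ) := by exact_mod_cast hcentpos
    have hclass : (Nat.card {x : Equiv.Perm (Fin n) | IsConj π x} : ℝ) =
        (Nat.factorial n : ℝ) /
          (Nat.card (Subgroup.centralizer {π} : Subgroup (Equiv.Perm (Fin n))) : ℝ) := by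
      rw [eq_div_iff (ne_of_gt hcR)]
      exact heqR
    rw [hclass]
    exact div_le_div_of_nonneg_left (by positivity) hcR part1
  -- Part 3
  have hn2 : (0 : ℝ) ≤ (n : ℝ) / 2 := by positivity
  have hkle : (k : ℝ) ≤ (n : ℝ) / 2 := by
    have : (2 * k : ℝ) ≤ (n : ℝ) := by exact_mod_cast hk2
    linarith
  have hmain : ((n : ℝ) / 2) ^ ((k : ℝ) / 2) * ((k : ℝ) ^ ((k : ℝ) / 2)) ≤
      (Nat.descFactorial n k : ℝ) := by
    have e1 : ((n : ℝ) / 2) ^ ((k : ℝ) / 2) * ((k : ℝ) ^ ((k : ℝ) / 2)) =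
        (((n : ℝ) / 2) * k) ^ ((k : ℝ) / 2) :=
      (Real.mul_rpow hn2 (by positivity)).symm
    have e2 : (((n : ℝ) / 2) * k) ^ ((k : ℝ) / 2) ≤
        (((n : ℝ) / 2) * ((n : ℝ) / 2)) ^ ((k : ℝ) / 2) :=
      Real.rpow_le_rpow (by positivity) (mul_le_mul_of_nonneg_left hkle hn2) (by positivity)
    have e3 : (((n : ℝ) / 2) * ((n : ℝ) / 2)) ^ ((k : ℝ) / 2) = ((n : ℝ) / 2) ^ (k : ℕ) := by
      rw [show ((n : ℝ) / 2) * ((n : ℝ) / 2) = ((n : ℝ) / 2) ^ ((2 : ℕ) : ℝ) by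
          rw [Real.rpow_natCast]; ring,
        ← Real.rpow_mul hn2, show ((2 : ℕ) : ℝ) * ((k : ℝ) / 2) = ((k : ℕ) : ℝ) by push_cast; ring,
        Real.rpow_natCast]
    have e4 : ((n : ℝ) / 2) ^ (k : ℕ) ≤ (Nat.descFactorial n k : ℝ) := by
      calc ((n : ℝ) / 2) ^ (k : ℕ) ≤ ((n + 1 - k : ℕ) : ℝ) ^ (k : ℕ) := by
            refine pow_le_pow_left₀ hn2 ?_ _
            have : ((n + 1 - k : ℕ) : ℝ) = (n : ℝ) + 1 - (k : ℝ) := by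
              push_cast [Nat.cast_sub (by omega : k ≤ n + 1)]; ring
            rw [this]; linarith
        _ ≤ (Nat.descFactorial n k : ℝ) := by exact_mod_cast Nat.pow_sub_le_descFactorial n k
    calc ((n : ℝ) / 2) ^ ((k : ℝ) / 2) * ((k : ℝ) ^ ((k : ℝ) / 2))
        = (((n : ℝ) / 2) * k) ^ ((k : ℝ) / 2) := e1
      _ ≤ (((n : ℝ) / 2) * ((n : ℝ) / 2)) ^ ((k : ℝ) / 2) := e2
      _ = ((n : ℝ) / 2) ^ (k : ℕ) := e3
      _ ≤ (Nat.descFactorial n k : ℝ) := e4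
  have part3' : ((n : ℝ) / 2) ^ ((k : ℝ) / 2) ≤
      (Nat.factorial n : ℝ) /
        ((Nat.factorial (n - k) : ℝ) * (k : ℝ) ^ ((k : ℝ) / 2)) := by
    rw [le_div_iff₀ hDpos]
    calc ((n : ℝ) / 2) ^ ((k : ℝ) / 2) *
          ((Nat.factorial (n - k) : ℝ) * (k : ℝ) ^ ((k : ℝ) / 2))
        = (Nat.factorial (n - k) : ℝ) *
            (((n : ℝ) / 2) ^ ((k : ℝ) / 2) * ((k : ℝ) ^ ((k : ℝ) / 2))) := by ring
      _ ≤ (Nat.factorial (n - k) : ℝ) * (Nat.descFactorial n k : ℝ) :=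
          mul_le_mul_of_nonneg_left hmain (by positivity)
      _ = (Nat.factorial n : ℝ) := by exact_mod_cast Nat.factorial_mul_descFactorial hkn
  exact ⟨part1, part2, part3'.trans part2⟩
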